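/- arXiv:math/0611024 — 3 statements merged into one kernel-verified Lean document; each statement's English description precedes it below -/
import Mathlib

section
/- Let μ ⊆ λ be a nonzero composition with ℓ(μ) = d_{|μ|} =: d, and let 1 ≤ i_1 < ⋯ < i_d ≤ n index the nonzero parts of μ. Then for every permutation w ∈ S_d and every j = 1,…,d, one has μ_{i_j} > λ_{i_j} − min(λ_{i_{wj}}, λ_{i_j}). -/
noncomputable section

open scoped BigOperators

attribute [local instance] LieRing.ofAssociativeRing

/-- The matrix of the nilpotent `e` determined by the filling `row, col` of the diagram:
`e = Σ e_{h,k}` over pairs of boxes in the same row with `col k = col h + 1`. -/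
def eNil (F : Type*) [Field F] {n N : ℕ} (row : Fin N → Fin n) (col : Fin N → ℕ) :
    Matrix (Fin N) (Fin N) F :=
  ∑ h : Fin N, ∑ k : Fin N,
    if row h = row k ∧ col k = col h + 1 then Matrix.single h k (1 : F) else 0

/-- The shift `s_{i,j} = λ_j - min(λ_i, λ_j)`. -/
def sft {n : ℕ} (lam : Fin n → ℕ) (i j : Fin n) : ℕ := lam j - min (lam i) (lam j)

/-- The element `e_{i,j;r}` of the centralizer, as a matrix:
`Σ e_{h,k}` over boxes `h` in row `i` and `k` in row `j` with `col k - col h = r`. -/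
def eE (F : Type*) [Field F] {n N : ℕ} (row : Fin N → Fin n) (col : Fin N → ℕ)
    (i j : Fin n) (r : ℕ) : Matrix (Fin N) (Fin N) F :=
  ∑ h : Fin N, ∑ k : Fin N,
    if row h = i ∧ row k = j ∧ col k = col h + r then Matrix.single h k (1 : F) else 0

/-- The centralizer `g_e` of `e` in `gl_N(F)`, as a Lie subalgebra. -/
def gCent (F : Type*) [Field F] {N : ℕ} (e : Matrix (Fin N) (Fin N) F) :
    LieSubalgebra F (Matrix (Fin N) (Fin N) F) where
  carrier := {x | x * e = e * x}
  add_mem' := by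
    intro x y hx hy
    simp only [Set.mem_setOf_eq] at *
    rw [add_mul, mul_add, hx, hy]
  zero_mem' := by simp
  smul_mem' := by
    intro c x hx
    simp only [Set.mem_setOf_eq] at *
    rw [Matrix.smul_mul, Matrix.mul_smul, hx]
  lie_mem' := by
    intro x y hx hy
    simp only [Set.mem_setOf_eq, Ring.lie_def] at *
    rw [sub_mul, mul_sub, mul_assoc, hy, ← mul_assoc, hx, mul_assoc, mul_assoc, hx,
      ← mul_assoc, ← mul_assoc, hy, mul_assoc, mul_assoc]

/-- The sum of the `t` largest parts of `λ` (recall `λ_1 ≤ ⋯ ≤ λ_n`, zero-indexed). -/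
def topSum {n : ℕ} (lam : Fin n → ℕ) (t : ℕ) : ℕ :=
  ∑ i ∈ Finset.univ.filter (fun i : Fin n => n - t ≤ (i : ℕ)), lam i

/-- The invariant degree `d_r`: the least `d` with `λ_n + ⋯ + λ_{n-d+1} ≥ r`. -/
def invDeg {n : ℕ} (lam : Fin n → ℕ) (r : ℕ) : ℕ :=
  sInf {d : ℕ | r ≤ topSum lam d}

/-- The index set for the basis `{e_{i,j;r}}` of `g_e`: triples `(i,j,r)` with
`s_{i,j} ≤ r < λ_j`. -/
def BoxIdx {n : ℕ} (lam : Fin n → ℕ) : Type :=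
  {t : Fin n × Fin n × ℕ // sft lam t.1 t.2.1 ≤ t.2.2 ∧ t.2.2 < lam t.2.1}

/-- The column determinant of a matrix with (possibly noncommutative) ring entries:
`cdet A = Σ_w sgn(w) a_{w1,1} ⋯ a_{wn,n}`. -/
def cdet {R : Type*} [Ring R] {m : ℕ} (A : Matrix (Fin m) (Fin m) R) : R :=
  ∑ w : Equiv.Perm (Fin m), ((Equiv.Perm.sign w : ℤˣ) : ℤ) • (List.ofFn fun q => A (w q) q).prod

section UEA

variable (F : Type*) [Field F] {n N : ℕ} (lam : Fin n → ℕ)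
  (row : Fin N → Fin n) (col : Fin N → ℕ)
  (eB : Fin n → Fin n → ℕ → ↥(gCent F (eNil F row col)))

/-- `ẽ_{i,j;r} = e_{i,j;r} - δ_{r,0} δ_{i,j} (i-1) λ_i` inside `U(g_e)`
(zero-indexed: the scalar is `i·λ_i` for `i : Fin n`). -/
def eTilde (i j : Fin n) (r : ℕ) :
    UniversalEnvelopingAlgebra F ↥(gCent F (eNil F row col)) :=
  UniversalEnvelopingAlgebra.ι F (eB i j r) -
    (if r = 0 ∧ i = j then (((i : ℕ) * lam i : ℕ) : F) • 1 else 0)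

/-- The column determinant `cdet(μ)` in `U(g_e)` attached to `μ ⊆ λ`. -/
def cdetMu (μ : Fin n → Fin (N + 1)) :
    UniversalEnvelopingAlgebra F ↥(gCent F (eNil F row col)) :=
  ∑ w : Equiv.Perm (Fin (Finset.univ.filter (fun i : Fin n => (μ i : ℕ) ≠ 0)).card),
    ((Equiv.Perm.sign w : ℤˣ) : ℤ) •
      (List.ofFn fun j =>
        eTilde F lam row col eB
          (((Finset.univ.filter (fun i : Fin n => (μ i : ℕ) ≠ 0)).orderIsoOfFin rfl (w j)) : Fin n)
          (((Finset.univ.filter (fun i : Fin n => (μ i : ℕ) ≠ 0)).orderIsoOfFin rfl j) : Fin n)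
          ((μ (((Finset.univ.filter (fun i : Fin n => (μ i : ℕ) ≠ 0)).orderIsoOfFin rfl j) : Fin n) : ℕ) - 1)).prod

/-- The element `z_r = Σ_{μ ⊆ λ, |μ| = r, ℓ(μ) = d_r} cdet(μ)` of `U(g_e)`. -/
def zEl (r : ℕ) : UniversalEnvelopingAlgebra F ↥(gCent F (eNil F row col)) :=
  ∑ μ ∈ Finset.univ.filter (fun μ : Fin n → Fin (N + 1) =>
      (∀ i, (μ i : ℕ) ≤ lam i) ∧ (∑ i, (μ i : ℕ)) = r ∧
        (Finset.univ.filter (fun i : Fin n => (μ i : ℕ) ≠ 0)).card = invDeg lam r),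
    cdetMu F lam row col eB μ

end UEA

section Sym

variable (F : Type*) [Field F] {n : ℕ} (lam : Fin n → ℕ)

/-- The generator `e_{i,j;r}` of the symmetric algebra `S(g_e)`, modelled as the variable
`X (i,j,r)` of a polynomial ring (and `0` for indices out of range, which never occur). -/
def xE (i j : Fin n) (r : ℕ) : MvPolynomial (BoxIdx lam) F :=
  if h : sft lam i j ≤ r ∧ r < lam j then MvPolynomial.X ⟨(i, j, r), h⟩ else 0

/-- The summand of `x_r` attached to `μ ⊆ λ`:
`Σ_w sgn(w) e_{i_{w1},i_1;μ_{i_1}-1} ⋯ e_{i_{wd},i_d;μ_{i_d}-1}` in `S(g_e)`. -/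
def xcdetMu (N : ℕ) (μ : Fin n → Fin (N + 1)) : MvPolynomial (BoxIdx lam) F :=
  ∑ w : Equiv.Perm (Fin (Finset.univ.filter (fun i : Fin n => (μ i : ℕ) ≠ 0)).card),
    ((Equiv.Perm.sign w : ℤˣ) : ℤ) •
      ∏ j, xE F lam
          (((Finset.univ.filter (fun i : Fin n => (μ i : ℕ) ≠ 0)).orderIsoOfFin rfl (w j)) : Fin n)
          (((Finset.univ.filter (fun i : Fin n => (μ i : ℕ) ≠ 0)).orderIsoOfFin rfl j) : Fin n)
          ((μ (((Finset.univ.filter (fun i : Fin n => (μ i : ℕ) ≠ 0)).orderIsoOfFin rfl j) : Fin n) : ℕ) - 1)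

/-- The invariant `x_r ∈ S(g_e)`. -/
def xEl (N : ℕ) (r : ℕ) : MvPolynomial (BoxIdx lam) F :=
  ∑ μ ∈ Finset.univ.filter (fun μ : Fin n → Fin (N + 1) =>
      (∀ i, (μ i : ℕ) ≤ lam i) ∧ (∑ i, (μ i : ℕ)) = r ∧
        (Finset.univ.filter (fun i : Fin n => (μ i : ℕ) ≠ 0)).card = invDeg lam r),
    xcdetMu F lam N μ

end Sym

section Dual

variable (F : Type*) [Field F] {n N : ℕ} (lam : Fin n → ℕ)
  (row : Fin N → Fin n) (col : Fin N → ℕ)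
  (bE : Module.Basis (BoxIdx lam) F ↥(gCent F (eNil F row col)))

/-- The coadjoint action `(ad* x)(ξ) = -ξ ∘ (ad x)` of `g_e` on `g_e^*`. -/
def coad (x : ↥(gCent F (eNil F row col)))
    (ξ : Module.Dual F ↥(gCent F (eNil F row col))) :
    Module.Dual F ↥(gCent F (eNil F row col)) :=
  -(ξ ∘ₗ (LieAlgebra.ad F ↥(gCent F (eNil F row col)) x : _ →ₗ[F] _))

/-- The dual basis vector `f_{i,j;t}` of `g_e^*`, with the convention that it is `0`
for `t` outside the range `s_{i,j} ≤ t < λ_j`. -/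
def fHat (i j : Fin n) (t : ℤ) : Module.Dual F ↥(gCent F (eNil F row col)) :=
  if h : (sft lam i j : ℤ) ≤ t ∧ t < (lam j : ℤ) then
    bE.coord ⟨(i, j, t.toNat), ⟨show sft lam i j ≤ t.toNat by omega, show t.toNat < lam j by omega⟩⟩ else 0

/-- The basis vector `e_{i,j;r}` of `g_e`, with the convention that it is `0` for `r`
outside the range `s_{i,j} ≤ r < λ_j`. -/
def eHat (i j : Fin n) (r : ℕ) : ↥(gCent F (eNil F row col)) :=
  if h : sft lam i j ≤ r ∧ r < lam j then bE ⟨(i, j, r), h⟩ else 0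

/-- The functional `f = f_{1,2;λ_2-1} + f_{2,3;λ_3-1} + ⋯ + f_{n-1,n;λ_n-1} ∈ g_e^*`,
described by its values on the basis `{e_{i,j;r}}`. -/
def fReg : Module.Dual F ↥(gCent F (eNil F row col)) :=
  bE.constr F fun b : BoxIdx lam =>
    if (b.1.2.1 : ℕ) = (b.1.1 : ℕ) + 1 ∧ b.1.2.2 = lam b.1.2.1 - 1 then (1 : F) else 0

/-- The point `f + Σ_{j,t} a_{j,t} f_{n,j;t}` of the slice `S = f + V`, described by its
values on the basis `{e_{i,j;r}}`; here `a j t` is the coordinate `a_{j+1,t}` (rows of the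
diagram being zero-indexed). -/
def slicePt (a : ℕ → ℕ → F) : Module.Dual F ↥(gCent F (eNil F row col)) :=
  bE.constr F fun b : BoxIdx lam =>
    (if (b.1.2.1 : ℕ) = (b.1.1 : ℕ) + 1 ∧ b.1.2.2 = lam b.1.2.1 - 1 then (1 : F) else 0) +
      (if (b.1.1 : ℕ) = n - 1 then a (b.1.2.1 : ℕ) b.1.2.2 else 0)

/-- The subspace `V ⊆ g_e^*` spanned by the `f_{n,j;t}`, `0 ≤ t < λ_j`. -/
def sliceV : Submodule F (Module.Dual F ↥(gCent F (eNil F row col))) :=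
  Submodule.span F {φ | ∃ b : BoxIdx lam, (b.1.1 : ℕ) = n - 1 ∧ φ = bE.coord b}

/-- Restriction of polynomial functions on `g_e^*` to the slice `S = f + V`, as an
algebra homomorphism onto the coordinate ring of `S ≅ 𝔸^N` (with coordinates `a_{j,t}`,
`0 ≤ t < λ_j`, indexed by `Σ_j Fin (λ_j)`). -/
def restrictS : MvPolynomial (BoxIdx lam) F →ₐ[F] MvPolynomial ((j : Fin n) × Fin (lam j)) F :=
  MvPolynomial.aeval fun b : BoxIdx lam =>
    MvPolynomial.C
        (if (b.1.2.1 : ℕ) = (b.1.1 : ℕ) + 1 ∧ b.1.2.2 = lam b.1.2.1 - 1 then (1 : F) else 0) +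
      (if (b.1.1 : ℕ) = n - 1 then MvPolynomial.X ⟨b.1.2.1, ⟨b.1.2.2, b.2.2⟩⟩ else 0)

end Dual

lemma topSum_succ_aux {n : ℕ} (lam : Fin n → ℕ) (t : ℕ) (ht : t + 1 ≤ n) :
    topSum lam (t + 1) = lam ⟨n - t - 1, by omega⟩ + topSum lam t := by
  unfold topSum
  have hset : (Finset.univ.filter (fun i : Fin n => n - (t + 1) ≤ (i : ℕ))) =
      insert ⟨n - t - 1, by omega⟩ (Finset.univ.filter (fun i : Fin n => n - t ≤ (i : ℕ))) := by
    ext i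
    simp only [Finset.mem_filter, Finset.mem_univ, true_and, Finset.mem_insert,
      Fin.ext_iff]
    omega
  rw [hset, Finset.sum_insert (by simp; omega)]

lemma sum_le_topSum {n : ℕ} (lam : Fin n → ℕ) (hmono : Monotone lam) :
    ∀ t (A : Finset (Fin n)), A.card = t → ∑ i ∈ A, lam i ≤ topSum lam t := by
  intro t
  induction t with
  | zero =>
    intro A hA
    simp [Finset.card_eq_zero.mp hA]
  | succ t ih =>
    intro A hA
    have hAn : A.card ≤ n := by
      simpa using Finset.card_le_univ A
    have hne : A.Nonempty := Finset.card_pos.mp (by omega)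
    set a := A.min' hne with ha
    have haA : a ∈ A := A.min'_mem hne
    have hsub : A.erase a ⊆ Finset.Ioi a := by
      intro x hx
      rw [Finset.mem_Ioi]
      rcases Finset.mem_erase.mp hx with ⟨hxa, hxA⟩
      exact lt_of_le_of_ne (A.min'_le x hxA) (Ne.symm hxa)
    have hcard : (A.erase a).card = t := by
      rw [Finset.card_erase_of_mem haA]
      omega
    have hIoi : (Finset.Ioi a).card = n - 1 - (a : ℕ) := by
      simp [Fin.card_Ioi]
    have hale : (a : ℕ) ≤ n - t - 1 := by
      have := Finset.card_le_card hsub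
      omega
    have hstep := topSum_succ_aux lam t (by omega)
    have hsum' : ∑ i ∈ A, lam i = lam a + ∑ i ∈ A.erase a, lam i :=
      (Finset.add_sum_erase A lam haA).symm
    have h1 : lam a ≤ lam ⟨n - t - 1, by omega⟩ := hmono (by exact hale)
    have h2 := ih (A.erase a) hcard
    omega

lemma key {n : ℕ} (lam : Fin n → ℕ) (hmono : Monotone lam) (μ : Fin n → ℕ)
    (hsub : ∀ i, μ i ≤ lam i)
    (hd : (Finset.univ.filter fun i => μ i ≠ 0).card = invDeg lam (∑ i, μ i))
    (a b : Fin n) (hμa : μ a ≠ 0) (hμb : μ b ≠ 0) :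
    lam b - min (lam a) (lam b) < μ b := by
  set s := Finset.univ.filter (fun i => μ i ≠ 0) with hs
  have haS : a ∈ s := by simp [hs, hμa]
  have hbS : b ∈ s := by simp [hs, hμb]
  by_cases hlt : lam a < lam b
  · have hab : a ≠ b := by
      intro h; rw [h] at hlt; omega
    have hcard1 : 1 ≤ s.card := Finset.card_pos.mpr ⟨b, hbS⟩
    have h6 : ¬ (∑ i, μ i ≤ topSum lam (s.card - 1)) := by
      have hmem : s.card - 1 ∉ {d : ℕ | (∑ i, μ i) ≤ topSum lam d} := by
        apply Nat.notMem_of_lt_sInf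
        rw [invDeg] at hd
        omega
      simpa using hmem
    have hbA : b ∈ s.erase a := Finset.mem_erase.mpr ⟨hab.symm, hbS⟩
    have hcardA : (s.erase a).card = s.card - 1 := Finset.card_erase_of_mem haS
    have h1 : ∑ i ∈ s.erase a, lam i ≤ topSum lam (s.card - 1) :=
      sum_le_topSum lam hmono _ _ hcardA
    have h2 : lam b + ∑ i ∈ (s.erase a).erase b, lam i = ∑ i ∈ s.erase a, lam i :=
      Finset.add_sum_erase _ lam hbA
    have h3 : μ a + ∑ i ∈ s.erase a, μ i = ∑ i ∈ s, μ i :=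
      Finset.add_sum_erase _ μ haS
    have h3' : μ b + ∑ i ∈ (s.erase a).erase b, μ i = ∑ i ∈ s.erase a, μ i :=
      Finset.add_sum_erase _ μ hbA
    have h4 : ∑ i ∈ (s.erase a).erase b, μ i ≤ ∑ i ∈ (s.erase a).erase b, lam i :=
      Finset.sum_le_sum fun i _ => hsub i
    have h5 : ∑ i ∈ s, μ i = ∑ i, μ i := by
      rw [hs]
      exact Finset.sum_filter_ne_zero _
    have h7 : μ a ≤ lam a := hsub a
    omega
  · have : 0 < μ b := Nat.pos_of_ne_zero hμb
    omega

theorem statement8 {n N : ℕ} (lam : Fin n → ℕ)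
    (hpos : ∀ i, 0 < lam i) (hmono : Monotone lam) (hsum : ∑ i, lam i = N)
    (μ : Fin n → ℕ) (hsub : ∀ i, μ i ≤ lam i) (hne : μ ≠ 0)
    (hd : (Finset.univ.filter fun i => μ i ≠ 0).card = invDeg lam (∑ i, μ i)) :
    ∀ (w : Equiv.Perm (Fin (Finset.univ.filter fun i => μ i ≠ 0).card))
      (j : Fin (Finset.univ.filter fun i => μ i ≠ 0).card),
      lam (((Finset.univ.filter fun i => μ i ≠ 0).orderIsoOfFin rfl j : Fin n)) -
        min (lam (((Finset.univ.filter fun i => μ i ≠ 0).orderIsoOfFin rfl (w j) : Fin n)))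
          (lam (((Finset.univ.filter fun i => μ i ≠ 0).orderIsoOfFin rfl j : Fin n))) <
        μ (((Finset.univ.filter fun i => μ i ≠ 0).orderIsoOfFin rfl j : Fin n)) := by
  intro w j
  exact key lam hmono μ hsub hd _ _
    ((Finset.mem_filter.mp ((Finset.univ.filter fun i => μ i ≠ 0).orderIsoOfFin rfl (w j)).2).2)
    ((Finset.mem_filter.mp ((Finset.univ.filter fun i => μ i ≠ 0).orderIsoOfFin rfl j).2).2)
end
end

section
/- Fix 1 ≤ r ≤ N, let d := d_r and s := r − (λ_n + λ_{n−1} + ⋯ + λ_{n−d+2}). Then for every point v = f + Σ_{j=1}^n Σ_{t=0}^{λ_j−1} a_{j,t} f_{n,j;t} of the affine subspace S (with coefficients a_{j,t} ∈ F), the value of the polynomial function x_r at v equals (−1)^{d−1} a_{n−d+1, s−1}. -/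
noncomputable section

open scoped BigOperators

attribute [local instance 100] LieRing.ofAssociativeRing

section MyAux

open Finset


lemma aux_perm_sum {F : Type*} [Field F] {c : ℕ} (hc : 0 < c) (G : Fin c → Fin c → F)
    (H1 : ∀ p q : Fin c, G p q ≠ 0 → (p : ℕ) = c - 1 ∨ (p : ℕ) + 1 = (q : ℕ)) :
    ∑ w : Equiv.Perm (Fin c), ((Equiv.Perm.sign w : ℤˣ) : ℤ) • ∏ q, G (w q) q
      = (-1) ^ (c - 1) *
        ∏ q : Fin c, G ⟨if (q : ℕ) = 0 then c - 1 else (q : ℕ) - 1,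
            by split <;> omega⟩ q := by
  obtain ⟨c', rfl⟩ : ∃ c', c = c' + 1 := ⟨c - 1, by omega⟩
  set w₀ : Equiv.Perm (Fin (c' + 1)) := (Fin.cycleRange (Fin.last c'))⁻¹ with hw₀
  have hw₀app : ∀ q : Fin (c' + 1),
      w₀ q = ⟨if (q : ℕ) = 0 then c' + 1 - 1 else (q : ℕ) - 1,
        by split <;> omega⟩ := by
    intro q
    rw [hw₀, Equiv.Perm.inv_def, Equiv.symm_apply_eq]
    by_cases hq : (q : ℕ) = 0
    · have : q = 0 := Fin.ext (by simpa using hq)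
      subst this
      simp only [hq, if_pos]
      have : (⟨c' + 1 - 1, by omega⟩ : Fin (c' + 1)) = Fin.last c' := rfl
      rw [this, Fin.cycleRange_self]
    · have hlt : (⟨(q : ℕ) - 1, by omega⟩ : Fin (c' + 1)) < Fin.last c' := by
        rw [Fin.lt_iff_val_lt_val]
        simp only [Fin.val_last]
        omega
      have hmk : (⟨if (q : ℕ) = 0 then c' + 1 - 1 else (q : ℕ) - 1, by split <;> omega⟩ :
          Fin (c' + 1)) = ⟨(q : ℕ) - 1, by omega⟩ := by
        apply Fin.ext; simp [hq]
      rw [hmk, Fin.cycleRange_of_lt hlt]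
      apply Fin.ext
      rw [Fin.val_add_one_of_lt hlt]
      simp only [Fin.val_mk]
      omega
  have hclass : ∀ w : Equiv.Perm (Fin (c' + 1)), (∏ q, G (w q) q) ≠ 0 → w = w₀ := by
    intro w hP
    have hfac : ∀ q, G (w q) q ≠ 0 := by
      intro q
      exact Finset.prod_ne_zero_iff.mp hP q (mem_univ q)
    have hw0 : w 0 = Fin.last c' := by
      rcases H1 _ _ (hfac 0) with h | h
      · apply Fin.ext; simpa using h
      · simp at h
    apply Equiv.ext
    intro q
    rw [hw₀app q]
    by_cases hq : (q : ℕ) = 0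
    · have : q = 0 := Fin.ext (by simpa using hq)
      subst this
      rw [hw0]
      apply Fin.ext
      simp
    · rcases H1 _ _ (hfac q) with h | h
      · exfalso
        have : w q = w 0 := by
          rw [hw0]; apply Fin.ext; simpa using h
        have : q = 0 := w.injective this
        exact hq (by simp [this])
      · apply Fin.ext
        simp only [Fin.val_mk, if_neg hq]
        omega
  rw [Finset.sum_eq_single_of_mem w₀ (mem_univ w₀)]
  · have hsgn : Equiv.Perm.sign w₀ = (-1) ^ c' := by
      rw [hw₀, Equiv.Perm.sign_inv, Fin.sign_cycleRange, Fin.val_last]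
    rw [hsgn]
    have h1 : (((((-1 : ℤˣ)) ^ c' : ℤˣ)) : ℤ) = (-1) ^ c' := by
      push_cast; ring
    have h2 : ∏ q, G (w₀ q) q = ∏ q : Fin (c' + 1),
        G ⟨if (q : ℕ) = 0 then c' + 1 - 1 else (q : ℕ) - 1, by split <;> omega⟩ q := by
      refine Finset.prod_congr rfl fun q _ => ?_
      rw [hw₀app q]
    rw [h1, zsmul_eq_mul, h2]
    push_cast
    norm_num
  · intro w _ hw
    have : (∏ q, G (w q) q) = 0 := by
      by_contra h
      exact hw (hclass w h)
    rw [this, smul_zero]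


lemma topSum_zero' {n : ℕ} (lam : Fin n → ℕ) : topSum lam 0 = 0 := by
  rw [topSum]
  have h : (univ.filter fun i : Fin n => n - 0 ≤ (i : ℕ)) = ∅ :=
    Finset.filter_false_of_mem (fun i _ => by have := i.isLt; omega)
  rw [h, sum_empty]

lemma topSum_n {n : ℕ} (lam : Fin n → ℕ) : topSum lam n = ∑ i, lam i := by
  rw [topSum]
  congr 1
  ext i
  simp

lemma card_filter_ge (n k : ℕ) (hk : k ≤ n) :
    (Finset.univ.filter fun i : Fin n => k ≤ (i : ℕ)).card = n - k := by
  rcases Nat.lt_or_ge k n with h | h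
  · have : (Finset.univ.filter fun i : Fin n => k ≤ (i : ℕ)) = Finset.Ici (⟨k, h⟩ : Fin n) := by
      ext i
      simp [Finset.mem_Ici, Fin.le_def]
    rw [this, Fin.card_Ici]
  · have h0 : (Finset.univ.filter fun i : Fin n => k ≤ (i : ℕ)) = ∅ :=
      Finset.filter_false_of_mem (fun i _ => by have := i.isLt; omega)
    rw [h0]
    simp
    omega

/-- The value of the slice point on the basis vector `e_{i,j;t}` (and `0` out of range). -/
def Efun (F : Type*) [Field F] {n : ℕ} (lam : Fin n → ℕ) (a : ℕ → ℕ → F)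
    (i j : Fin n) (t : ℕ) : F :=
  if sft lam i j ≤ t ∧ t < lam j then
    (if (j : ℕ) = (i : ℕ) + 1 ∧ t = lam j - 1 then (1 : F) else 0) +
      (if (i : ℕ) = n - 1 then a (j : ℕ) t else 0)
  else 0

lemma Efun_structure {F : Type*} [Field F] {n : ℕ} {lam : Fin n → ℕ} {a : ℕ → ℕ → F}
    {i j : Fin n} {t : ℕ} (h : Efun F lam a i j t ≠ 0) :
    (i : ℕ) = n - 1 ∨ ((j : ℕ) = (i : ℕ) + 1 ∧ t = lam j - 1) := by
  by_contra hc
  apply h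
  rw [Efun]
  split
  · rw [if_neg (fun hb => hc (Or.inr hb)), if_neg (fun ha => hc (Or.inl ha)), add_zero]
  · rfl

lemma Efun_last {F : Type*} [Field F] {n : ℕ} {lam : Fin n → ℕ} (hmono : Monotone lam)
    (a : ℕ → ℕ → F) {i j : Fin n} {t : ℕ}
    (hi : (i : ℕ) = n - 1) (hj : (j : ℕ) ≠ (i : ℕ) + 1) (ht : t < lam j) :
    Efun F lam a i j t = a (j : ℕ) t := by
  have hji : j ≤ i := by
    rw [Fin.le_def]
    have := j.isLt
    omega
  have hminj : min (lam i) (lam j) = lam j := min_eq_right (hmono hji)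
  rw [Efun, if_pos ⟨by rw [sft, hminj]; omega, ht⟩, if_neg (fun hh => hj hh.1), if_pos hi,
    zero_add]

lemma Efun_adj {F : Type*} [Field F] {n : ℕ} {lam : Fin n → ℕ} (hmono : Monotone lam)
    (hpos : ∀ i, 0 < lam i) (a : ℕ → ℕ → F) {i j : Fin n}
    (hj : (j : ℕ) = (i : ℕ) + 1) (hi : (i : ℕ) ≠ n - 1) :
    Efun F lam a i j (lam j - 1) = 1 := by
  have hij : i ≤ j := by rw [Fin.le_def]; omega
  have hmin : min (lam i) (lam j) = lam i := min_eq_left (hmono hij)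
  have h1 := hpos i
  have h2 := hpos j
  rw [Efun, if_pos ⟨by rw [sft, hmin]; omega, by omega⟩, if_pos ⟨hj, rfl⟩, if_neg hi, add_zero]

/-- The candidate composition `μ₀` (as a function to `ℕ`). -/
def mu0fun {n : ℕ} (lam : Fin n → ℕ) (d s : ℕ) : Fin n → ℕ :=
  fun i => if (i : ℕ) < n - d then 0 else if (i : ℕ) = n - d then s else lam i

lemma mu0fun_ne_zero {n : ℕ} (lam : Fin n → ℕ) (d s : ℕ) (hs : 1 ≤ s)
    (hpos : ∀ i, 0 < lam i) (i : Fin n) :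
    mu0fun lam d s i ≠ 0 ↔ n - d ≤ (i : ℕ) := by
  rw [mu0fun]
  split_ifs with h1 h2
  · constructor
    · intro h
      exact absurd rfl h
    · intro h
      omega
  · constructor
    · intro _
      omega
    · intro _
      omega
  · have := hpos i
    constructor
    · intro _
      omega
    · intro _
      omega

lemma sum_mu0fun {n : ℕ} (lam : Fin n → ℕ) (d s : ℕ) (hd1 : 1 ≤ d) (hdn : d ≤ n) :
    ∑ i : Fin n, mu0fun lam d s i = s + topSum lam (d - 1) := by
  rw [← Finset.sum_filter_add_sum_filter_not Finset.univ (fun i : Fin n => n - d ≤ (i : ℕ))]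
  have h2 : ∑ i ∈ univ.filter (fun i : Fin n => ¬ (n - d ≤ (i : ℕ))), mu0fun lam d s i = 0 := by
    apply Finset.sum_eq_zero
    intro i hi
    simp only [mem_filter] at hi
    rw [mu0fun, if_pos (by omega)]
  rw [h2, add_zero]
  have hm : n - d < n := by omega
  have h1 : univ.filter (fun i : Fin n => n - d ≤ (i : ℕ))
      = insert (⟨n - d, hm⟩ : Fin n) (univ.filter fun i : Fin n => n - (d - 1) ≤ (i : ℕ)) := by
    ext i
    have := i.isLt
    simp [Fin.ext_iff]
    omega
  have hnm : (⟨n - d, hm⟩ : Fin n) ∉ univ.filter fun i : Fin n => n - (d - 1) ≤ (i : ℕ) := by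
    simp
    omega
  rw [h1, Finset.sum_insert hnm]
  have hv : mu0fun lam d s ⟨n - d, hm⟩ = s := by
    rw [mu0fun]
    simp
  rw [hv]
  congr 1
  rw [topSum]
  apply Finset.sum_congr rfl
  intro i hi
  simp only [mem_filter] at hi
  rw [mu0fun, if_neg (by omega), if_neg (by omega)]


lemma classify_aux {F : Type*} [Field F] {n N : ℕ} (lam : Fin n → ℕ) (hpos : ∀ i, 0 < lam i)
    (a : ℕ → ℕ → F) (d s r : ℕ) (hd1 : 1 ≤ d) (hdn : d ≤ n)
    (hsrel : s + topSum lam (d - 1) = r)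
    (μ : Fin n → Fin (N + 1)) (hle : ∀ i, (μ i : ℕ) ≤ lam i) (hsumr : (∑ i, (μ i : ℕ)) = r)
    (sp : Finset (Fin n)) (hsp : ∀ i : Fin n, i ∈ sp ↔ (μ i : ℕ) ≠ 0)
    (hcard : sp.card = d)
    (w : Equiv.Perm (Fin sp.card))
    (hfac : ∀ q, Efun F lam a (sp.orderEmbOfFin rfl (w q)) (sp.orderEmbOfFin rfl q)
        ((μ (sp.orderEmbOfFin rfl q) : ℕ) - 1) ≠ 0) :
    (∀ i, (μ i : ℕ) = mu0fun lam d s i) ∧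
      (∀ q : Fin sp.card, ((w q) : ℕ) = if (q : ℕ) = 0 then d - 1 else (q : ℕ) - 1) := by
  have hc0 : 0 < sp.card := by omega
  have hmem1 : ∀ q, (μ (sp.orderEmbOfFin rfl q) : ℕ) ≠ 0 := fun q =>
    (hsp _).mp (Finset.orderEmbOfFin_mem sp rfl q)
  have hmono' : StrictMono (sp.orderEmbOfFin rfl) := (sp.orderEmbOfFin rfl).strictMono
  have halt : ∀ q, ((sp.orderEmbOfFin rfl (w q) : ℕ) = n - 1) ∨
      ((sp.orderEmbOfFin rfl q : ℕ) = (sp.orderEmbOfFin rfl (w q) : ℕ) + 1 ∧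
        (μ (sp.orderEmbOfFin rfl q) : ℕ) = lam (sp.orderEmbOfFin rfl q)) := by
    intro q
    rcases Efun_structure (hfac q) with h | h
    · exact Or.inl h
    · refine Or.inr ⟨h.1, ?_⟩
      have h2 := h.2
      have h3 := hpos (sp.orderEmbOfFin rfl q)
      have h4 := hle (sp.orderEmbOfFin rfl q)
      have h5 := hmem1 q
      omega
  have hz0lt : 0 < sp.card := hc0
  set z0 : Fin sp.card := ⟨0, hc0⟩ with hz0def
  have hw0 : (sp.orderEmbOfFin rfl (w z0) : ℕ) = n - 1 := by
    rcases halt z0 with h | h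
    · exact h
    · exfalso
      have h1 : sp.orderEmbOfFin rfl z0 ≤ sp.orderEmbOfFin rfl (w z0) :=
        hmono'.monotone (Fin.mk_le_of_le_val (Nat.zero_le _))
      rw [Fin.le_def] at h1
      omega
  have hchain : ∀ q : Fin sp.card, (q : ℕ) ≠ 0 →
      (sp.orderEmbOfFin rfl q : ℕ) = (sp.orderEmbOfFin rfl (w q) : ℕ) + 1 ∧
        (μ (sp.orderEmbOfFin rfl q) : ℕ) = lam (sp.orderEmbOfFin rfl q) := by
    intro q hq
    rcases halt q with h | h
    · exfalso
      have h1 : sp.orderEmbOfFin rfl (w q) = sp.orderEmbOfFin rfl (w z0) :=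
        Fin.ext (by rw [h, hw0])
      have h2 : w q = w z0 := hmono'.injective h1
      have h3 : q = z0 := w.injective h2
      apply hq
      rw [h3]
    · exact h
  have hval : ∀ q : Fin sp.card,
      (sp.orderEmbOfFin rfl q : ℕ) = (sp.orderEmbOfFin rfl z0 : ℕ) + (q : ℕ) := by
    suffices H : ∀ t, ∀ ht : t < sp.card,
        (sp.orderEmbOfFin rfl ⟨t, ht⟩ : ℕ) = (sp.orderEmbOfFin rfl z0 : ℕ) + t by
      intro q
      have := H (q : ℕ) q.isLt
      simpa using this
    intro t
    induction t with
    | zero => intro ht; rw [Nat.add_zero]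
    | succ t ih =>
      intro ht
      have ht' : t < sp.card := by omega
      have hlow : (sp.orderEmbOfFin rfl ⟨t, ht'⟩ : ℕ) < (sp.orderEmbOfFin rfl ⟨t + 1, ht⟩ : ℕ) := by
        have h : (⟨t, ht'⟩ : Fin sp.card) < ⟨t + 1, ht⟩ := by
          rw [Fin.lt_def]
          simp
        exact hmono' h
      have hch := hchain ⟨t + 1, ht⟩ (by simp)
      have hwlt : (sp.orderEmbOfFin rfl (w ⟨t + 1, ht⟩) : ℕ) ≤ (sp.orderEmbOfFin rfl ⟨t, ht'⟩ : ℕ) := by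
        have h1 : w ⟨t + 1, ht⟩ < ⟨t + 1, ht⟩ := by
          by_contra hge
          push_neg at hge
          have h2 := hmono'.monotone hge
          rw [Fin.le_def] at h2
          omega
        have h2 : w ⟨t + 1, ht⟩ ≤ ⟨t, ht'⟩ := by
          rw [Fin.le_def]
          rw [Fin.lt_def] at h1
          simp only [Fin.val_mk] at h1 ⊢
          omega
        have h3 := hmono'.monotone h2
        rw [Fin.le_def] at h3
        exact h3
      have := ih ht'
      omega
  have hm0a : (sp.orderEmbOfFin rfl z0 : ℕ) = n - sp.card := by
    set qlast : Fin sp.card := ⟨sp.card - 1, by omega⟩ with hqlast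
    have h1 := hval (w z0)
    have h2 : ((w z0) : ℕ) < sp.card := (w z0).isLt
    have h3 : (sp.orderEmbOfFin rfl qlast : ℕ) < n := (sp.orderEmbOfFin rfl qlast).isLt
    have h4 := hval qlast
    have h5 : (qlast : ℕ) = sp.card - 1 := rfl
    omega
  have hm0b : ((w z0) : ℕ) = sp.card - 1 := by
    have h1 := hval (w z0)
    have h2 : ((w z0) : ℕ) < sp.card := (w z0).isLt
    omega
  have hsurj' : ∀ i : Fin n, (μ i : ℕ) ≠ 0 → ∃ q, sp.orderEmbOfFin rfl q = i := by
    intro i hi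
    have hmem : i ∈ sp := (hsp i).mpr hi
    have h : i ∈ Set.range (sp.orderEmbOfFin rfl) := by
      rw [Finset.range_orderEmbOfFin]
      exact hmem
    exact h
  have hother : ∀ i : Fin n, (i : ℕ) ≠ n - d → (μ i : ℕ) = mu0fun lam d s i := by
    intro i hi
    rcases Nat.lt_or_ge (i : ℕ) (n - d) with hlt | hge
    · rw [mu0fun, if_pos hlt]
      by_contra hne
      obtain ⟨q, hq⟩ := hsurj' i hne
      have h := hval q
      rw [hq] at h
      omega
    · have hgt : n - d < (i : ℕ) := by omega
      have htlt : (i : ℕ) - (n - d) < sp.card := by have := i.isLt; omega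
      have heq : sp.orderEmbOfFin rfl ⟨(i : ℕ) - (n - d), htlt⟩ = i := by
        apply Fin.ext
        rw [hval ⟨(i : ℕ) - (n - d), htlt⟩]
        simp only [Fin.val_mk]
        omega
      have hch := hchain ⟨(i : ℕ) - (n - d), htlt⟩ (by simp only [Fin.val_mk]; omega)
      rw [heq] at hch
      rw [mu0fun, if_neg (by omega), if_neg hi]
      exact hch.2
  constructor
  · intro i
    by_cases hi : (i : ℕ) = n - d
    · have hA : ∀ j : Fin n, (μ j : ℕ) = mu0fun lam d ((μ i : ℕ)) j := by
        intro j
        by_cases hj : (j : ℕ) = n - d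
        · have hji : j = i := Fin.ext (by omega)
          rw [hji, mu0fun, if_neg (by omega), if_pos hi]
        · rw [hother j hj, mu0fun, mu0fun]
          by_cases h1 : (j : ℕ) < n - d
          · rw [if_pos h1, if_pos h1]
          · rw [if_neg h1, if_neg h1, if_neg hj, if_neg hj]
      have hB : ∑ j : Fin n, (μ j : ℕ) = (μ i : ℕ) + topSum lam (d - 1) := by
        rw [Finset.sum_congr rfl (fun j _ => hA j)]
        exact sum_mu0fun lam d _ hd1 hdn
      rw [hsumr] at hB
      rw [mu0fun, if_neg (by omega), if_pos hi]
      omega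
    · exact hother i hi
  · intro q
    by_cases hq : (q : ℕ) = 0
    · have hqz : q = z0 := Fin.ext hq
      rw [if_pos hq, hqz, hm0b, hcard]
    · rw [if_neg hq]
      have hch := (hchain q hq).1
      have h1 := hval q
      have h2 := hval (w q)
      omega


end MyAux

set_option maxHeartbeats 2000000 in
theorem statement9
    {F : Type*} [Field F] [IsAlgClosed F] [CharZero F] {n N : ℕ} (lam : Fin n → ℕ)
    (hpos : ∀ i, 0 < lam i) (hmono : Monotone lam) (hsum : ∑ i, lam i = N)
    (row : Fin N → Fin n) (col : Fin N → ℕ)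
    (hcol : ∀ k, 1 ≤ col k ∧ col k ≤ lam (row k))
    (horder : ∀ k l : Fin N, k < l ↔ (row k < row l ∨ (row k = row l ∧ col k < col l)))
    (hsurj : ∀ (i : Fin n) (c : ℕ), 1 ≤ c → c ≤ lam i → ∃ k, row k = i ∧ col k = c)
    (bE : Module.Basis (BoxIdx lam) F ↥(gCent F (eNil F row col)))
    (hbE : ∀ b : BoxIdx lam,
      (↑(bE b) : Matrix (Fin N) (Fin N) F) = eE F row col b.1.1 b.1.2.1 b.1.2.2)
    (r : ℕ) (hr1 : 1 ≤ r) (hrN : r ≤ N) (a : ℕ → ℕ → F) :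
    MvPolynomial.eval (fun b : BoxIdx lam => slicePt F lam row col bE a (bE b))
        (xEl F lam N r) =
      (-1) ^ (invDeg lam r - 1) * a (n - invDeg lam r) (r - topSum lam (invDeg lam r - 1) - 1) := by
  classical
  have hlamN : ∀ i, lam i ≤ N := by
    intro i
    rw [← hsum]
    exact Finset.single_le_sum (fun j _ => Nat.zero_le _) (Finset.mem_univ i)
  set d := invDeg lam r with hd
  have hmemn : r ≤ topSum lam n := by rw [topSum_n, hsum]; exact hrN
  have hdn : d ≤ n := Nat.sInf_le hmemn
  have hdr : r ≤ topSum lam d :=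
    Nat.sInf_mem (⟨n, hmemn⟩ : {k : ℕ | r ≤ topSum lam k}.Nonempty)
  have hd1 : 1 ≤ d := by
    rcases Nat.eq_zero_or_pos d with h0 | h1
    · rw [h0, topSum_zero'] at hdr; omega
    · exact h1
  have hrgt : topSum lam (d - 1) < r := by
    by_contra h
    push_neg at h
    have : d ≤ d - 1 := Nat.sInf_le h
    omega
  have hmlt : n - d < n := by omega
  set m : Fin n := ⟨n - d, hmlt⟩ with hm
  have hmv : (m : ℕ) = n - d := rfl
  have hsplit : topSum lam d = lam m + topSum lam (d - 1) := by
    have h1 : (Finset.univ.filter fun i : Fin n => n - d ≤ (i : ℕ))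
        = insert m (Finset.univ.filter fun i : Fin n => n - (d - 1) ≤ (i : ℕ)) := by
      ext i
      have := i.isLt
      simp [Finset.mem_insert, hm, Fin.ext_iff]
      omega
    rw [topSum, topSum, h1, Finset.sum_insert (by simp [hm]; omega)]
  set s := r - topSum lam (d - 1) with hs
  have hs1 : 1 ≤ s := by omega
  have hsle : s ≤ lam m := by omega
  -- the distinguished composition μ₀
  set mu0 : Fin n → Fin (N + 1) := fun i =>
    ⟨mu0fun lam d s i, by
      apply Nat.lt_succ_of_le
      rw [mu0fun]
      split
      · exact Nat.zero_le _
      · split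
        · exact le_trans hsle (hlamN m)
        · exact hlamN i⟩ with hmu0
  have hmu0val : ∀ i, (mu0 i : ℕ) = mu0fun lam d s i := fun i => rfl
  -- the point of evaluation and the reduction to `Efun`
  have hxE : ∀ (i j : Fin n) (t : ℕ),
      MvPolynomial.eval (fun b : BoxIdx lam => slicePt F lam row col bE a (bE b))
        (xE F lam i j t) = Efun F lam a i j t := by
    intro i j t
    rw [xE, Efun]
    split
    · rename_i h
      erw [MvPolynomial.eval_X]
      show slicePt F lam row col bE a (bE ⟨(i, j, t), h⟩) = _
      erw [slicePt, Module.Basis.constr_basis]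
    · rw [map_zero]
  rw [xEl]
  rw [map_sum]
  simp only [xcdetMu, map_sum, map_zsmul, map_prod, hxE]
  -- === membership of μ₀ ===
  have hsp0 : (Finset.univ.filter fun i : Fin n => ((mu0 i) : ℕ) ≠ 0)
      = Finset.univ.filter fun i : Fin n => n - d ≤ (i : ℕ) := by
    apply Finset.filter_congr
    intro i _
    simp only [hmu0val, ne_eq]
    rw [← ne_eq, mu0fun_ne_zero lam d s hs1 hpos i]
  have hcard0 : (Finset.univ.filter fun i : Fin n => ((mu0 i) : ℕ) ≠ 0).card = d := by
    rw [hsp0, card_filter_ge n (n - d) (by omega)]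
    omega
  have hmu0mem : mu0 ∈ Finset.univ.filter (fun μ : Fin n → Fin (N + 1) =>
      (∀ i, (μ i : ℕ) ≤ lam i) ∧ (∑ i, (μ i : ℕ)) = r ∧
        (Finset.univ.filter fun i : Fin n => (μ i : ℕ) ≠ 0).card = invDeg lam r) := by
    rw [Finset.mem_filter]
    refine ⟨Finset.mem_univ _, fun i => ?_, ?_, ?_⟩
    · rw [hmu0val, mu0fun]
      split_ifs with h1 h2
      · exact Nat.zero_le _
      · have hieq : i = m := Fin.ext (by omega)
        rw [hieq]
        exact hsle
      · exact le_refl _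
    · simp only [hmu0val]
      rw [sum_mu0fun lam d s hd1 hdn]
      omega
    · exact hcard0
  -- === reduce the outer sum to μ₀ ===
  refine (Finset.sum_eq_single_of_mem mu0 hmu0mem ?_).trans ?_
  · intro μ hμ hne
    rw [Finset.mem_filter] at hμ
    obtain ⟨-, h1, h2, h3⟩ := hμ
    apply Finset.sum_eq_zero
    intro w _
    have hP : (∏ q, Efun F lam a
        (((Finset.univ.filter fun i : Fin n => (μ i : ℕ) ≠ 0).orderIsoOfFin rfl (w q) : Fin n))
        (((Finset.univ.filter fun i : Fin n => (μ i : ℕ) ≠ 0).orderIsoOfFin rfl q : Fin n))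
        ((μ (((Finset.univ.filter fun i : Fin n => (μ i : ℕ) ≠ 0).orderIsoOfFin rfl q : Fin n)) : ℕ) - 1)) = 0 := by
      by_contra hPne
      have hfac := fun q => Finset.prod_ne_zero_iff.mp hPne q (Finset.mem_univ q)
      have hall := (classify_aux lam hpos a d s r hd1 hdn (by omega) μ h1 h2
        (Finset.univ.filter fun i : Fin n => (μ i : ℕ) ≠ 0)
        (fun i => by simp) h3 w hfac).1
      apply hne
      funext i
      exact Fin.ext (by rw [hall i, hmu0val])
    rw [hP, smul_zero]
  -- === the μ₀ term ===
  have hc0pos : 0 < (Finset.univ.filter fun i : Fin n => ((mu0 i) : ℕ) ≠ 0).card := by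
    rw [hcard0]; omega
  have hemb0 : ∀ q : Fin (Finset.univ.filter fun i : Fin n => ((mu0 i) : ℕ) ≠ 0).card,
      (((Finset.univ.filter fun i : Fin n => ((mu0 i) : ℕ) ≠ 0).orderEmbOfFin rfl q : Fin n) : ℕ)
        = n - d + (q : ℕ) := by
    have hfs : ∀ q : Fin (Finset.univ.filter fun i : Fin n => ((mu0 i) : ℕ) ≠ 0).card,
        (⟨n - d + (q : ℕ), by have := q.isLt; omega⟩ : Fin n)
          ∈ (Finset.univ.filter fun i : Fin n => ((mu0 i) : ℕ) ≠ 0) := by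
      intro q
      refine Finset.mem_filter.mpr ⟨Finset.mem_univ _, ?_⟩
      have h := (mu0fun_ne_zero lam d s hs1 hpos
        (⟨n - d + (q : ℕ), by have := q.isLt; omega⟩ : Fin n)).mpr
        (by simp only [Fin.val_mk]; omega)
      exact h
    have hfmono : StrictMono (fun q : Fin (Finset.univ.filter
        fun i : Fin n => ((mu0 i) : ℕ) ≠ 0).card =>
        (⟨n - d + (q : ℕ), by have := q.isLt; omega⟩ : Fin n)) := by
      intro x y hxy
      rw [Fin.lt_def] at hxy ⊢
      simp only [Fin.val_mk]
      omega
    have huniq := Finset.orderEmbOfFin_unique rfl hfs hfmono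
    intro q
    rw [← congrFun huniq q]
  have hmu0e : ∀ q : Fin (Finset.univ.filter fun i : Fin n => ((mu0 i) : ℕ) ≠ 0).card,
      ((mu0 ((Finset.univ.filter fun i : Fin n => ((mu0 i) : ℕ) ≠ 0).orderEmbOfFin rfl q)) : ℕ)
        = if (q : ℕ) = 0 then s else
            lam ((Finset.univ.filter fun i : Fin n => ((mu0 i) : ℕ) ≠ 0).orderEmbOfFin rfl q) := by
    intro q
    rw [hmu0val, mu0fun]
    have h0 := hemb0 q
    by_cases hq : (q : ℕ) = 0
    · rw [if_pos hq, if_neg (by omega), if_pos (by omega)]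
    · rw [if_neg hq, if_neg (by omega), if_neg (by omega)]
  refine Eq.trans (aux_perm_sum hc0pos
    (fun p q => Efun F lam a
      ((Finset.univ.filter fun i : Fin n => ((mu0 i) : ℕ) ≠ 0).orderEmbOfFin rfl p)
      ((Finset.univ.filter fun i : Fin n => ((mu0 i) : ℕ) ≠ 0).orderEmbOfFin rfl q)
      (((mu0 ((Finset.univ.filter fun i : Fin n => ((mu0 i) : ℕ) ≠ 0).orderEmbOfFin rfl q)) : ℕ) - 1))
    ?_) ?_
  · -- H1
    intro p q hG
    have hp := hemb0 p
    have hq := hemb0 q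
    have hpl := p.isLt
    have hql := q.isLt
    rcases Efun_structure hG with h | h
    · left
      omega
    · right
      have := h.1
      omega
  · -- final computation
    have hfactor : ∀ q : Fin (Finset.univ.filter fun i : Fin n => ((mu0 i) : ℕ) ≠ 0).card,
        ∀ p : Fin (Finset.univ.filter fun i : Fin n => ((mu0 i) : ℕ) ≠ 0).card,
        (p : ℕ) = (if (q : ℕ) = 0 then
            (Finset.univ.filter fun i : Fin n => ((mu0 i) : ℕ) ≠ 0).card - 1 else (q : ℕ) - 1) →
        Efun F lam a
          ((Finset.univ.filter fun i : Fin n => ((mu0 i) : ℕ) ≠ 0).orderEmbOfFin rfl p)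
          ((Finset.univ.filter fun i : Fin n => ((mu0 i) : ℕ) ≠ 0).orderEmbOfFin rfl q)
          (((mu0 ((Finset.univ.filter fun i : Fin n => ((mu0 i) : ℕ) ≠ 0).orderEmbOfFin rfl q)) : ℕ) - 1)
          = if (q : ℕ) = 0 then a (n - d) (s - 1) else 1 := by
      intro q p hp
      have hpv := hemb0 p
      have hqv := hemb0 q
      have hql := q.isLt
      have hpl := p.isLt
      by_cases hq : (q : ℕ) = 0
      · rw [if_pos hq] at hp ⊢
        have ht : ((mu0 ((Finset.univ.filter fun i : Fin n => ((mu0 i) : ℕ) ≠ 0).orderEmbOfFin rfl q)) : ℕ) = s := by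
          rw [hmu0e q, if_pos hq]
        rw [ht]
        have hjm : ((Finset.univ.filter fun i : Fin n => ((mu0 i) : ℕ) ≠ 0).orderEmbOfFin rfl q) = m := by
          apply Fin.ext
          rw [hqv]
          omega
        have := Efun_last hmono a
          (i := (Finset.univ.filter fun i : Fin n => ((mu0 i) : ℕ) ≠ 0).orderEmbOfFin rfl p)
          (j := (Finset.univ.filter fun i : Fin n => ((mu0 i) : ℕ) ≠ 0).orderEmbOfFin rfl q)
          (t := s - 1)
          (by omega)
          (by omega)
          (by rw [congrArg lam hjm]; have := hpos m; omega)
        rw [this, hqv, hq]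
        norm_num
      · rw [if_neg hq] at hp ⊢
        have ht : ((mu0 ((Finset.univ.filter fun i : Fin n => ((mu0 i) : ℕ) ≠ 0).orderEmbOfFin rfl q)) : ℕ)
            = lam ((Finset.univ.filter fun i : Fin n => ((mu0 i) : ℕ) ≠ 0).orderEmbOfFin rfl q) := by
          rw [hmu0e q, if_neg hq]
        rw [ht]
        exact Efun_adj hmono hpos a
          (by omega)
          (by omega)
    rw [Finset.prod_congr rfl (fun q _ => hfactor q _ rfl),
      Finset.prod_eq_single_of_mem (⟨0, hc0pos⟩ : Fin _) (Finset.mem_univ _)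
        (fun b _ hb => if_neg (fun h0 => hb (Fin.ext h0))),
      if_pos (by rfl), hcard0]
end
end

section
/- For all 1 ≤ i ≤ j < n and 0 ≤ r < λ_i, one has (ad* e_{i,j+1;λ_{j+1}−r−1})(f) = f_{j,i;r} − f_{j+1,i+1;λ_{i+1}−λ_{j+1}+r}, where f_{a,b;t} is interpreted as 0 whenever t lies outside the range s_{a,b} ≤ t < λ_b. -/
noncomputable section

open scoped BigOperators

attribute [local instance 100] LieRing.ofAssociativeRing

section Aux
variable {F : Type*} [Field F] {n N : ℕ} (lam : Fin n → ℕ) (row : Fin N → Fin n) (col : Fin N → ℕ)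

lemma eE_apply (a b : Fin n) (r : ℕ) (h k : Fin N) :
    eE F row col a b r h k = if row h = a ∧ row k = b ∧ col k = col h + r then 1 else 0 := by
  classical
  unfold eE
  simp only [Matrix.sum_apply]
  rw [Finset.sum_eq_single h]
  · rw [Finset.sum_eq_single k]
    · split_ifs with h1 <;> simp [Matrix.single]
    · intro k' _ hk'
      split_ifs with h1
      · simp [Matrix.single, hk']
      · rfl
    · simp
  · intro h' _ hh'
    apply Finset.sum_eq_zero
    intro k' _
    split_ifs with h1
    · simp [Matrix.single, hh']
    · rfl
  · simp
end Aux
section Aux2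
variable {F : Type*} [Field F] {n N : ℕ} (lam : Fin n → ℕ) (row : Fin N → Fin n) (col : Fin N → ℕ)

lemma box_inj (horder : ∀ k l : Fin N, k < l ↔ (row k < row l ∨ (row k = row l ∧ col k < col l)))
    {k l : Fin N} (h1 : row k = row l) (h2 : col k = col l) : k = l := by
  rcases lt_trichotomy k l with h | h | h
  · rw [horder] at h
    rcases h with h | ⟨_, h⟩
    · exact absurd h1 (ne_of_lt h)
    · omega
  · exact h
  · rw [horder] at h
    rcases h with h | ⟨_, h⟩
    · exact absurd h1.symm (ne_of_lt h)
    · omega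

lemma eE_mul_ne {a b b' c : Fin n} (hbb : b ≠ b') (r s : ℕ) :
    eE F row col a b r * eE F row col b' c s = 0 := by
  ext h k
  rw [Matrix.mul_apply]
  apply Finset.sum_eq_zero
  intro m _
  rw [eE_apply, eE_apply]
  split_ifs with h1 h2
  · exact absurd (h1.2.1.symm.trans h2.1) hbb
  all_goals simp

lemma eE_mul (hcol : ∀ k, 1 ≤ col k ∧ col k ≤ lam (row k))
    (horder : ∀ k l : Fin N, k < l ↔ (row k < row l ∨ (row k = row l ∧ col k < col l)))
    (hsurj : ∀ (i : Fin n) (c : ℕ), 1 ≤ c → c ≤ lam i → ∃ k, row k = i ∧ col k = c)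
    (a b c : Fin n) (r s : ℕ) (hs : sft lam b c ≤ s) :
    eE F row col a b r * eE F row col b c s = eE F row col a c (r + s) := by
  ext h k
  rw [Matrix.mul_apply, eE_apply]
  by_cases H : row h = a ∧ row k = c ∧ col k = col h + (r + s)
  · obtain ⟨m, hm1, hm2⟩ : ∃ m, row m = b ∧ col m = col h + r := by
      apply hsurj
      · have := (hcol h).1; omega
      · have h1 := (hcol k).2
        rw [H.2.1] at h1
        have : sft lam b c = lam c - min (lam b) (lam c) := rfl
        omega
    rw [if_pos H, Finset.sum_eq_single m]
    · rw [eE_apply, eE_apply, if_pos ⟨H.1, hm1, hm2⟩, if_pos ⟨hm1, H.2.1, by omega⟩, one_mul]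
    · intro m' _ hm'
      rw [eE_apply, eE_apply]
      split_ifs with h1 h2
      · exact absurd (box_inj row col horder (h1.2.1.trans hm1.symm) (by omega)) hm'
      all_goals simp
    · simp
  · rw [if_neg H]
    apply Finset.sum_eq_zero
    intro m _
    rw [eE_apply, eE_apply]
    split_ifs with h1 h2
    · exact absurd ⟨h1.1, h2.2.1, by omega⟩ H
    all_goals simp

lemma eE_zero (hcol : ∀ k, 1 ≤ col k ∧ col k ≤ lam (row k))
    (a c : Fin n) {t : ℕ} (ht : lam c ≤ t) : eE F row col a c t = (0 : Matrix (Fin N) (Fin N) F) := by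
  ext h k
  rw [eE_apply]
  have h1 := hcol h
  have h2 := hcol k
  split_ifs with hc
  · rw [hc.2.1] at h2; omega
  · rfl
end Aux2
section Aux3
variable {F : Type*} [Field F] {n N : ℕ} (lam : Fin n → ℕ) (row : Fin N → Fin n) (col : Fin N → ℕ)
  (bE : Module.Basis (BoxIdx lam) F ↥(gCent F (eNil F row col)))
  (hbE : ∀ b : BoxIdx lam,
      (↑(bE b) : Matrix (Fin N) (Fin N) F) = eE F row col b.1.1 b.1.2.1 b.1.2.2)
  (hcol : ∀ k, 1 ≤ col k ∧ col k ≤ lam (row k))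
  (horder : ∀ k l : Fin N, k < l ↔ (row k < row l ∨ (row k = row l ∧ col k < col l)))
  (hsurj : ∀ (i : Fin n) (c : ℕ), 1 ≤ c → c ≤ lam i → ∃ k, row k = i ∧ col k = c)

include hbE hcol in
lemma eHat_coe (a c : Fin n) (t : ℕ) (h1 : sft lam a c ≤ t) :
    (↑(eHat F lam row col bE a c t) : Matrix (Fin N) (Fin N) F) = eE F row col a c t := by
  unfold eHat
  split_ifs with h
  · exact hbE ⟨(a, c, t), h⟩
  · rw [eE_zero lam row col hcol a c (by omega)]
    simp

include hbE hcol horder hsurj in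
lemma bracket_eq (a b : Fin n) (R : ℕ) (hx : sft lam a b ≤ R ∧ R < lam b)
    (k l : Fin n) (s : ℕ) (hb : sft lam k l ≤ s ∧ s < lam l) :
    ⁅bE ⟨(a, b, R), hx⟩, bE ⟨(k, l, s), hb⟩⁆ =
      (if k = b then eHat F lam row col bE a l (R + s) else 0) -
        (if l = a then eHat F lam row col bE k b (s + R) else 0) := by
  have hsft : ∀ p q t : Fin n, sft lam p q + sft lam q t ≥ sft lam p t := by
    intro p q t; unfold sft; omega
  apply Subtype.ext
  rw [LieSubalgebra.coe_bracket, Ring.lie_def]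
  push_cast
  rw [apply_ite (fun z : ↥(gCent F (eNil F row col)) => (↑z : Matrix (Fin N) (Fin N) F)),
    apply_ite (fun z : ↥(gCent F (eNil F row col)) => (↑z : Matrix (Fin N) (Fin N) F))]
  erw [hbE, hbE]
  simp only [ZeroMemClass.coe_zero]
  by_cases hk : k = b
  · rw [if_pos hk]
    rw [← hk] at hx ⊢
    rw [eE_mul lam row col hcol horder hsurj a k l R s hb.1,
      eHat_coe lam row col bE hbE hcol a l (R + s) (by have := hsft a k l; omega)]
    by_cases hl : l = a
    · rw [if_pos hl]
      rw [← hl] at hx ⊢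
      rw [eE_mul lam row col hcol horder hsurj k l k s R hx.1,
        eHat_coe lam row col bE hbE hcol k k (s + R) (by unfold sft; omega)]
    · rw [if_neg hl, eE_mul_ne row col hl s R, sub_zero]
  · rw [if_neg hk, eE_mul_ne row col (fun hh => hk hh.symm) R s, zero_sub, zero_sub]
    by_cases hl : l = a
    · rw [if_pos hl]
      rw [hl] at hb ⊢
      rw [eE_mul lam row col hcol horder hsurj k a b s R hx.1,
        eHat_coe lam row col bE hbE hcol k b (s + R) (by have := hsft k a b; omega)]
    · rw [if_neg hl, eE_mul_ne row col hl s R, neg_zero]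
end Aux3
section Aux4
variable {F : Type*} [Field F] {n N : ℕ} (lam : Fin n → ℕ) (row : Fin N → Fin n) (col : Fin N → ℕ)
  (bE : Module.Basis (BoxIdx lam) F ↥(gCent F (eNil F row col)))

instance : DecidableEq (BoxIdx lam) :=
  fun x y => decidable_of_iff (x.1 = y.1) Subtype.ext_iff.symm

lemma fReg_eHat (a c : Fin n) (t : ℕ) :
    fReg F lam row col bE (eHat F lam row col bE a c t) =
      if (c : ℕ) = (a : ℕ) + 1 ∧ t = lam c - 1 ∧ sft lam a c ≤ t ∧ t < lam c then 1 else 0 := by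
  unfold eHat
  by_cases h : sft lam a c ≤ t ∧ t < lam c
  · rw [dif_pos h]
    unfold fReg
    erw [Module.Basis.constr_basis]
    by_cases h1 : (c : ℕ) = (a : ℕ) + 1 ∧ t = lam c - 1
    · rw [if_pos h1, if_pos ⟨h1.1, h1.2, h.1, h.2⟩]
    · rw [if_neg h1, if_neg (fun hc => h1 ⟨hc.1, hc.2.1⟩)]
  · rw [dif_neg h, map_zero, if_neg (fun hc => h ⟨hc.2.2.1, hc.2.2.2⟩)]

lemma coord_eval (c b : BoxIdx lam) : bE.coord c (bE b) = if b = c then 1 else 0 := by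
  rw [Module.Basis.coord_apply, Module.Basis.repr_self, Finsupp.single_apply]

end Aux4

lemma box_eq_iff {n : ℕ} {lam : Fin n → ℕ} {a b a' b' : Fin n} {c c' : ℕ}
    {h : sft lam a b ≤ c ∧ c < lam b} {h' : sft lam a' b' ≤ c' ∧ c' < lam b'} :
    ((⟨(a, b, c), h⟩ : BoxIdx lam) = ⟨(a', b', c'), h'⟩) ↔ a = a' ∧ b = b' ∧ c = c' := by
  constructor
  · intro hc
    have h2 : ((a, b, c) : Fin n × Fin n × ℕ) = (a', b', c') := Subtype.ext_iff.mp hc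
    exact ⟨congrArg (fun z : Fin n × Fin n × ℕ => z.1) h2,
      congrArg (fun z : Fin n × Fin n × ℕ => z.2.1) h2,
      congrArg (fun z : Fin n × Fin n × ℕ => z.2.2) h2⟩
  · rintro ⟨rfl, rfl, rfl⟩
    rfl

section Aux5
variable {F : Type*} [Field F] {n N : ℕ} (lam : Fin n → ℕ) (row : Fin N → Fin n) (col : Fin N → ℕ)
  (bE : Module.Basis (BoxIdx lam) F ↥(gCent F (eNil F row col)))
lemma coord_eval' (a b a' b' : Fin n) (c c' : ℕ)
    (h : sft lam a b ≤ c ∧ c < lam b) (h' : sft lam a' b' ≤ c' ∧ c' < lam b') :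
    bE.coord ⟨(a', b', c'), h'⟩ (bE ⟨(a, b, c), h⟩)
      = if a = a' ∧ b = b' ∧ c = c' then 1 else 0 := by
  erw [coord_eval]
  by_cases hq : a = a' ∧ b = b' ∧ c = c'
  · rw [if_pos hq]; exact if_pos (box_eq_iff.mpr hq)
  · rw [if_neg hq]; exact if_neg (fun hc => hq (box_eq_iff.mp hc))

end Aux5
theorem statement15
    {F : Type*} [Field F] [IsAlgClosed F] [CharZero F] {n N : ℕ} (lam : Fin n → ℕ)
    (hpos : ∀ i, 0 < lam i) (hmono : Monotone lam) (hsum : ∑ i, lam i = N)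
    (row : Fin N → Fin n) (col : Fin N → ℕ)
    (hcol : ∀ k, 1 ≤ col k ∧ col k ≤ lam (row k))
    (horder : ∀ k l : Fin N, k < l ↔ (row k < row l ∨ (row k = row l ∧ col k < col l)))
    (hsurj : ∀ (i : Fin n) (c : ℕ), 1 ≤ c → c ≤ lam i → ∃ k, row k = i ∧ col k = c)
    (bE : Module.Basis (BoxIdx lam) F ↥(gCent F (eNil F row col)))
    (hbE : ∀ b : BoxIdx lam,
      (↑(bE b) : Matrix (Fin N) (Fin N) F) = eE F row col b.1.1 b.1.2.1 b.1.2.2)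
    (i j : Fin n) (hij : (i : ℕ) ≤ (j : ℕ)) (hj : (j : ℕ) + 1 < n) (r : ℕ) (hr : r < lam i) :
    coad F row col
        (eHat F lam row col bE i ⟨(j : ℕ) + 1, hj⟩ (lam ⟨(j : ℕ) + 1, hj⟩ - r - 1))
        (fReg F lam row col bE) =
      fHat F lam row col bE j i (r : ℤ) -
        fHat F lam row col bE ⟨(j : ℕ) + 1, hj⟩ ⟨(i : ℕ) + 1, by omega⟩
          ((lam ⟨(i : ℕ) + 1, by omega⟩ : ℤ) - (lam ⟨(j : ℕ) + 1, hj⟩ : ℤ) + (r : ℤ)) := by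
  classical
  have hin : (i : ℕ) + 1 < n := by omega
  set J : Fin n := ⟨(j : ℕ) + 1, hj⟩ with hJdef
  set I : Fin n := ⟨(i : ℕ) + 1, hin⟩ with hIdef
  have hJv : (J : ℕ) = (j : ℕ) + 1 := rfl
  have hIv : (I : ℕ) = (i : ℕ) + 1 := rfl
  have hij' : lam i ≤ lam j := hmono hij
  have hjJ : lam j ≤ lam J := hmono (by rw [Fin.le_def, hJv]; omega)
  have hiI : lam i ≤ lam I := hmono (by rw [Fin.le_def, hIv]; omega)
  have hIJ : lam I ≤ lam J := hmono (by rw [Fin.le_def, hJv, hIv]; omega)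
  have hpi := hpos i
  have hpj := hpos j
  have hpI := hpos I
  have hpJ := hpos J
  have hx : sft lam i J ≤ lam J - r - 1 ∧ lam J - r - 1 < lam J := by
    unfold sft; constructor <;> omega
  refine Module.Basis.ext bE fun b => ?_
  obtain ⟨⟨k, l, s⟩, hb⟩ := b
  -- left hand side
  rw [show eHat F lam row col bE i J (lam J - r - 1) = bE ⟨(i, J, lam J - r - 1), hx⟩ from
    dif_pos hx]
  unfold coad
  simp only [LinearMap.neg_apply, LinearMap.comp_apply, LieAlgebra.ad_apply]
  rw [bracket_eq lam row col bE hbE hcol horder hsurj i J (lam J - r - 1) hx k l s hb]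
  rw [map_sub,
    apply_ite (fReg F lam row col bE),
    apply_ite (fReg F lam row col bE),
    map_zero, fReg_eHat, fReg_eHat, neg_sub]
  -- right hand side
  rw [LinearMap.sub_apply]
  unfold fHat
  have sji : sft lam j i = 0 := by unfold sft; omega
  have sJI : sft lam J I = 0 := by unfold sft; omega
  have c1 : (sft lam j i : ℤ) ≤ (r : ℤ) ∧ (r : ℤ) < (lam i : ℤ) := by
    rw [sji]; constructor <;> omega
  rw [dif_pos c1, coord_eval' lam row col bE]
  congr 1
  -- first claim
  · by_cases hl : l = i
    · subst hl
      by_cases hk : k = j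
      · subst hk
        rw [if_pos rfl]
        simp only [eq_self_iff_true, true_and, sft, Int.toNat_natCast]
        congr 1; apply propext; omega
      · rw [if_pos rfl, if_neg (fun hc => hk (Fin.ext (by omega : (k : ℕ) = (j : ℕ)))),
          if_neg (fun hc => hk hc.1)]
    · rw [if_neg hl, if_neg (fun hc => hl hc.2.1)]
  -- second claim
  · by_cases hc2 : (0 : ℤ) ≤ (lam I : ℤ) - (lam J : ℤ) + (r : ℤ)
    · rw [dif_pos (by rw [sJI]; constructor <;> omega), coord_eval' lam row col bE]
      by_cases hk : k = J
      · subst hk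
        rw [if_pos rfl]
        by_cases hl : l = I
        · subst hl
          simp only [eq_self_iff_true, true_and, sft]
          congr 1; apply propext; omega
        · rw [if_neg (fun hc => hl (Fin.ext (by omega : (l : ℕ) = (I : ℕ)))),
            if_neg (fun hc => hl hc.2.1)]
      · rw [if_neg hk, if_neg (fun hc => hk hc.1)]
    · rw [dif_neg (fun hc => hc2 (by rw [sJI] at hc; omega)), LinearMap.zero_apply]
      by_cases hk : k = J
      · rw [if_pos hk, if_neg (by
          rintro ⟨h1, h2, h3, h4⟩
          have hlam : lam l = lam I := congrArg lam (Fin.ext (by omega : (l : ℕ) = (I : ℕ)))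
          omega)]
      · rw [if_neg hk]
end
end
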